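/- Let a and b be independent random vectors, with a uniformly distributed on the open ball of radius s in ℝ^m and b uniformly distributed on the open ball of radius s in ℝ^n. Let X be an m×n real matrix of rank 1 with singular value σ₁ > 0. Then for every δ > 0, P[|aᵀXb| ≤ δ] ≤ δ · D · (1/σ₁) · ( (2/s²) + (2/s²)·log max(s²σ₁/δ, 1) ), where D = 2V(n−1,1)V(m−1,1)/(V(m,1)V(n,1)) and V(k,1) is the volume of the unit ball in ℝ^k. -/

import Mathlib

open MeasureTheory Filter Set
attribute [local instance] Matrix.frobeniusNormedAddCommGroup Matrix.frobeniusNormedSpace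

noncomputable instance (m n : ℕ) : MeasureSpace (Matrix (Fin m) (Fin n) ℝ) :=
  inferInstanceAs (MeasureSpace ((Fin m) → (Fin n) → ℝ))

/-- covering number by open balls of radius ρ -/
noncomputable def covN {E : Type*} [PseudoMetricSpace E] (S : Set E) (ρ : ℝ) : ℕ :=
  sInf {k : ℕ | ∃ t : Finset E, t.card = k ∧ S ⊆ ⋃ x ∈ t, Metric.ball x ρ}

noncomputable def dimUpper {E : Type*} [PseudoMetricSpace E] (S : Set E) : ℝ :=
  limsup (fun ρ : ℝ => Real.log (covN S ρ) / Real.log (1/ρ)) (nhdsWithin 0 (Set.Ioi 0))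

noncomputable def dimLower {E : Type*} [PseudoMetricSpace E] (S : Set E) : ℝ :=
  liminf (fun ρ : ℝ => Real.log (covN S ρ) / Real.log (1/ρ)) (nhdsWithin 0 (Set.Ioi 0))

/-- singular values (unsorted, with multiplicity) -/
noncomputable def singVals {m n : ℕ} (X : Matrix (Fin m) (Fin n) ℝ) : Fin n → ℝ :=
  fun i => Real.sqrt (((by simpa [Matrix.conjTranspose_eq_transpose_of_trivial] using
    Matrix.isHermitian_conjTranspose_mul_self X : (X.transpose * X).IsHermitian)).eigenvalues i)

noncomputable def sigma1 {m n : ℕ} (X : Matrix (Fin m) (Fin n) ℝ) : ℝ :=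
  ⨆ i, singVals X i

open scoped Classical in
/-- product of nonzero singular values -/
noncomputable def Delta {m n : ℕ} (X : Matrix (Fin m) (Fin n) ℝ) : ℝ :=
  ∏ i ∈ Finset.univ.filter (fun i => singVals X i ≠ 0), singVals X i

/-- volume of the unit ball in ℝ^k -/
noncomputable def VB (k : ℕ) : ℝ :=
  (volume (Metric.ball (0 : EuclideanSpace ℝ (Fin k)) 1)).toReal

/-- surface area of unit sphere in ℝ^r : A(r-1,1) = r * V(r,1) -/
noncomputable def ASurf (r : ℕ) : ℝ := r * VB r

/-- uniform distribution on the open ball of radius s in E -/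
noncomputable def unifBall (E : Type*) [MeasureSpace E] [PseudoMetricSpace E] [Zero E] (s : ℝ) : Measure E :=
  (volume (Metric.ball (0 : E) s))⁻¹ • volume.restrict (Metric.ball (0:E) s)

open Matrix Metric
open scoped InnerProductSpace

lemma rankOne_decomp {m n : ℕ} (X : Matrix (Fin m) (Fin n) ℝ) (hX : X.rank = 1) :
    ∃ (u₀ : Fin m → ℝ) (v₀ : Fin n → ℝ), u₀ ≠ 0 ∧ v₀ ≠ 0 ∧ ∀ i j, X i j = u₀ i * v₀ j := by
  have hfr : Module.finrank ℝ (LinearMap.range X.mulVecLin) = 1 := hX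
  obtain ⟨v, hv0, hv⟩ := finrank_eq_one_iff'.mp hfr
  set col : Fin n → LinearMap.range X.mulVecLin := fun j =>
    ⟨X.mulVec (Pi.single j 1), ⟨Pi.single j 1, by simp [Matrix.mulVecLin_apply]⟩⟩ with hcol
  set v₀ : Fin n → ℝ := fun j => (hv (col j)).choose with hv₀
  have key : ∀ i j, X i j = (v : Fin m → ℝ) i * v₀ j := by
    intro i j
    have hc : v₀ j • (v : Fin m → ℝ) = X.mulVec (Pi.single j 1) :=
      congrArg Subtype.val (hv (col j)).choose_spec
    have h2 := congrFun hc i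
    simp only [Pi.smul_apply, smul_eq_mul, Matrix.mulVec_single, Matrix.col_apply, op_smul_eq_mul, mul_one] at h2
    rw [mul_comm]; exact h2.symm
  refine ⟨(v : Fin m → ℝ), v₀, fun h => hv0 (Subtype.ext h), ?_, key⟩
  intro h
  have hX0 : X = 0 := by
    ext i j; rw [key i j, h]; simp
  rw [hX0, Matrix.rank_zero] at hX
  exact one_ne_zero hX.symm

lemma sigma1_of_rank_one {m n : ℕ} (X : Matrix (Fin m) (Fin n) ℝ) (hX : X.rank = 1)
    (c : ℝ) (hc : 0 < c) (u : Fin m → ℝ) (v : Fin n → ℝ)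
    (hu : ∑ i, u i ^ 2 = 1) (hvn : ∑ j, v j ^ 2 = 1)
    (hXij : ∀ i j, X i j = c * (u i * v j)) : sigma1 X = c := by
  have hA := (by simpa [Matrix.conjTranspose_eq_transpose_of_trivial] using
    Matrix.isHermitian_conjTranspose_mul_self X : (X.transpose * X).IsHermitian)
  have hAjk : ∀ j k, (Xᴴ * X) j k = c ^ 2 * (v j * v k) := by
    intro j k
    have : ∀ i, Xᴴ j i * X i k = (c ^ 2 * (v j * v k)) * u i ^ 2 := by
      intro i; simp only [Matrix.conjTranspose_apply, star_trivial, hXij]; ring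
    rw [Matrix.mul_apply, Finset.sum_congr rfl (fun i _ => this i), ← Finset.mul_sum, hu, mul_one]
  have hAA : (Xᴴ * X) * (Xᴴ * X) = (c ^ 2) • (Xᴴ * X) := by
    ext j k
    have : ∀ l, (Xᴴ * X) j l * (Xᴴ * X) l k = (c ^ 2 * (c ^ 2 * (v j * v k))) * v l ^ 2 := by
      intro l; rw [hAjk, hAjk]; ring
    rw [Matrix.mul_apply, Finset.sum_congr rfl (fun l _ => this l), ← Finset.mul_sum, hvn, mul_one,
      Matrix.smul_apply, hAjk, smul_eq_mul]
  have heig : ∀ i, hA.eigenvalues i = 0 ∨ hA.eigenvalues i = c ^ 2 := by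
    intro i
    set w := (WithLp.equiv 2 ((j : Fin n) → ℝ)) (hA.eigenvectorBasis i) with hwdef
    have hw : (Xᴴ * X) *ᵥ w = hA.eigenvalues i • w := hA.mulVec_eigenvectorBasis i
    have h1 : ((Xᴴ * X) * (Xᴴ * X)) *ᵥ w = (hA.eigenvalues i ^ 2) • w := by
      rw [← Matrix.mulVec_mulVec, hw, Matrix.mulVec_smul, hw, smul_smul, ← sq]
    have h2 : ((Xᴴ * X) * (Xᴴ * X)) *ᵥ w = (c ^ 2 * hA.eigenvalues i) • w := by
      rw [hAA, Matrix.smul_mulVec, hw, smul_smul]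
    have hwne : w ≠ 0 := by
      intro h0
      have : hA.eigenvectorBasis i = 0 := by
        apply (WithLp.equiv 2 ((j : Fin n) → ℝ)).injective
        exact h0
      exact (hA.eigenvectorBasis.toBasis.ne_zero i) (by simpa using this)
    have heq : (hA.eigenvalues i ^ 2 - c ^ 2 * hA.eigenvalues i) • w = 0 := by
      rw [sub_smul, h1.symm.trans h2, sub_self]
    have hsc : hA.eigenvalues i ^ 2 - c ^ 2 * hA.eigenvalues i = 0 :=
      (smul_eq_zero.mp heq).resolve_right hwne
    rcases mul_eq_zero.mp (by ring_nf; ring_nf at hsc; linarith : hA.eigenvalues i * (hA.eigenvalues i - c ^ 2) = 0) with h | h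
    · exact Or.inl h
    · exact Or.inr (by linarith [sub_eq_zero.mp h])
  have hex : ∃ i, hA.eigenvalues i ≠ 0 := by
    have hr : (Xᴴ * X).rank = 1 := by rw [Matrix.rank_conjTranspose_mul_self]; exact hX
    rw [show (Xᴴ * X) = (Xᵀ * X) from rfl, hA.rank_eq_card_non_zero_eigs] at hr
    have hpos : 0 < Fintype.card {i // hA.eigenvalues i ≠ 0} := by omega
    obtain ⟨⟨i, hi⟩⟩ := Fintype.card_pos_iff.mp hpos
    exact ⟨i, hi⟩
  obtain ⟨i0, hi0⟩ := hex
  have hi0' : hA.eigenvalues i0 = c ^ 2 := (heig i0).resolve_left hi0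
  have hsv : ∀ i, singVals X i = 0 ∨ singVals X i = c := by
    intro i
    rcases heig i with h | h
    · left; unfold singVals; rw [h, Real.sqrt_zero]
    · right; unfold singVals; rw [h, Real.sqrt_sq hc.le]
  have hsv0 : singVals X i0 = c := by
    unfold singVals; rw [hi0', Real.sqrt_sq hc.le]
  have hne : Nonempty (Fin n) := ⟨i0⟩
  apply le_antisymm
  · exact ciSup_le (fun i => by rcases hsv i with h | h <;> rw [h]; exact hc.le)
  · have := le_ciSup (Set.Finite.bddAbove (Set.finite_range (singVals X))) i0
    rwa [hsv0] at this

lemma slab_bound {m' : ℕ} {s : ℝ} (hs : 0 < s) (u : EuclideanSpace ℝ (Fin (m' + 1))) (hu : ‖u‖ = 1)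
    {A : Set ℝ} (hA : MeasurableSet A) :
    volume {x : EuclideanSpace ℝ (Fin (m' + 1)) | ⟪u, x⟫_ℝ ∈ A ∧ ‖x‖ < s} ≤
      volume A * volume (ball (0 : EuclideanSpace ℝ (Fin m')) s) := by
  -- orthonormal basis with b 0 = u
  have hortho : Orthonormal ℝ (({0} : Set (Fin (m' + 1))).restrict (fun _ => u)) := by
    rw [orthonormal_iff_ite]
    rintro ⟨i, hi⟩ ⟨j, hj⟩
    simp only [mem_singleton_iff] at hi hj
    subst hi; subst hj
    simp only [restrict_apply, if_true, eq_self_iff_true, if_pos]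
    have h2 : ⟪u, u⟫_ℝ = 1 := by rw [real_inner_self_eq_norm_sq, hu, one_pow]
    exact h2
  obtain ⟨b, hb⟩ := hortho.exists_orthonormalBasis_extension_of_card_eq
    (by simp [finrank_euclideanSpace]) 
  have hb0 : b 0 = u := hb 0 rfl
  -- the chain of measure preserving maps
  set e1 := (MeasurableEquiv.toLp 2 (Fin (m' + 1) → ℝ)).symm with he1
  set e2 := MeasurableEquiv.piFinSuccAbove (fun _ : Fin (m' + 1) => ℝ) 0 with he2
  have mp1 : MeasurePreserving b.repr volume volume := b.measurePreserving_repr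
  have mp2 : MeasurePreserving e1 volume volume := EuclideanSpace.volume_preserving_symm_measurableEquiv_toLp _
  have mp3 : MeasurePreserving e2 (volume : Measure (Fin (m' + 1) → ℝ))
      ((volume : Measure ℝ).prod (volume : Measure (Fin m' → ℝ))) := by
    have := measurePreserving_piFinSuccAbove (fun _ : Fin (m' + 1) => (volume : Measure ℝ)) 0
    exact this
  set B : Set (Fin m' → ℝ) := {z | ∑ i, (z i) ^ 2 < s ^ 2} with hB
  have hBmeas : MeasurableSet B := by
    apply measurableSet_lt (by measurability) measurable_const
  have hsubset : {x : EuclideanSpace ℝ (Fin (m' + 1)) | ⟪u, x⟫_ℝ ∈ A ∧ ‖x‖ < s} ⊆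
      (fun x => e2 (e1 (b.repr x))) ⁻¹' (A ×ˢ B) := by
    intro x ⟨hx1, hx2⟩
    have hy0 : (e2 (e1 (b.repr x))).1 = ⟪u, x⟫_ℝ := by
      simp [he2, he1, MeasurableEquiv.piFinSuccAbove, MeasurableEquiv.coe_toLp_symm,
        b.repr_apply_apply, hb0]
    constructor
    · rw [hy0]; exact hx1
    · show ∑ j, ((e2 (e1 (b.repr x))).2 j) ^ 2 < s ^ 2
      have hcomp : ∀ j, (e2 (e1 (b.repr x))).2 j = b.repr x ((0 : Fin (m' + 1)).succAbove j) := by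
        intro j
        simp only [he2, he1, MeasurableEquiv.piFinSuccAbove, MeasurableEquiv.coe_toLp_symm,
          MeasurableEquiv.coe_mk, Equiv.coe_fn_mk]
        rfl
      have hnorm : ∑ i, (b.repr x i) ^ 2 < s ^ 2 := by
        have h1 : Real.sqrt (∑ i, (b.repr x i) ^ 2) < s := by
          have : ‖b.repr x‖ = Real.sqrt (∑ i, (b.repr x i) ^ 2) := by
            rw [EuclideanSpace.norm_eq]; simp [Real.norm_eq_abs, sq_abs]
          rw [← this, b.repr.norm_map]; exact hx2
        have hs0 : 0 < s := lt_of_le_of_lt (Real.sqrt_nonneg _) h1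
        calc ∑ i, (b.repr x i) ^ 2 = (Real.sqrt (∑ i, (b.repr x i) ^ 2)) ^ 2 := by
              rw [Real.sq_sqrt]; positivity
          _ < s ^ 2 := by
              apply pow_lt_pow_left₀ h1 (Real.sqrt_nonneg _)
              norm_num
      calc ∑ j, ((e2 (e1 (b.repr x))).2 j) ^ 2
          = ∑ j, (b.repr x ((0 : Fin (m' + 1)).succAbove j)) ^ 2 := by
            exact Finset.sum_congr rfl (fun j _ => by rw [hcomp])
        _ ≤ ∑ i, (b.repr x i) ^ 2 := by
            rw [Fin.sum_univ_succAbove (fun i => (b.repr x i) ^ 2) 0]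
            nlinarith [sq_nonneg (b.repr x 0)]
        _ < s ^ 2 := hnorm
  have hprodmeas : MeasurableSet (A ×ˢ B) := hA.prod hBmeas
  have hballB : volume (ball (0 : EuclideanSpace ℝ (Fin m')) s) = volume B := by
    have mp' : MeasurePreserving (MeasurableEquiv.toLp 2 (Fin m' → ℝ))
        (volume : Measure (Fin m' → ℝ)) volume :=
      (EuclideanSpace.volume_preserving_symm_measurableEquiv_toLp _).symm
    rw [← mp'.measure_preimage (measurableSet_ball).nullMeasurableSet]
    congr 1
    ext z
    simp only [mem_preimage, mem_ball, dist_zero_right, hB, mem_setOf_eq]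
    rw [EuclideanSpace.norm_eq]
    constructor
    · intro h
      have hs0 : 0 < s := lt_of_le_of_lt (Real.sqrt_nonneg _) h
      have := (Real.sqrt_lt' hs0).mp (by simpa [sq_abs] using h)
      simpa [sq_abs] using this
    · intro h
      have hsum : (0:ℝ) ≤ ∑ i, (z i)^2 := by positivity
      have hs0 : 0 < s ^ 2 := lt_of_le_of_lt hsum h
      have hs0' : 0 < s := hs
      apply (Real.sqrt_lt' hs0').mpr
      simpa [sq_abs] using h
  calc volume {x : EuclideanSpace ℝ (Fin (m' + 1)) | ⟪u, x⟫_ℝ ∈ A ∧ ‖x‖ < s}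
      ≤ volume ((fun x => e2 (e1 (b.repr x))) ⁻¹' (A ×ˢ B)) := measure_mono hsubset
    _ = ((volume : Measure ℝ).prod (volume : Measure (Fin m' → ℝ))) (A ×ˢ B) := by
        have mp : MeasurePreserving (fun x => e2 (e1 (b.repr x))) volume
            ((volume : Measure ℝ).prod (volume : Measure (Fin m' → ℝ))) :=
          (mp3.comp (mp2.comp mp1))
        exact mp.measure_preimage hprodmeas.nullMeasurableSet
    _ = volume A * volume B := Measure.prod_prod A B
    _ = volume A * volume (ball (0 : EuclideanSpace ℝ (Fin m')) s) := by rw [hballB]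

lemma map_inner_le {m' : ℕ} {s : ℝ} (hs : 0 < s) (u : EuclideanSpace ℝ (Fin (m' + 1)))
    (hu : ‖u‖ = 1) :
    Measure.map (fun x => ⟪u, x⟫_ℝ) (unifBall (EuclideanSpace ℝ (Fin (m' + 1))) s) ≤
      ((volume (ball (0 : EuclideanSpace ℝ (Fin (m' + 1))) s))⁻¹ *
        volume (ball (0 : EuclideanSpace ℝ (Fin m')) s)) • volume.restrict (Ioo (-s) s) := by
  have hf : Measurable fun x : EuclideanSpace ℝ (Fin (m' + 1)) => ⟪u, x⟫_ℝ :=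
    (continuous_const.inner continuous_id).measurable
  rw [Measure.le_iff]
  intro A hA
  rw [Measure.map_apply hf hA]
  rw [unifBall, Measure.smul_apply, Measure.restrict_apply (hf hA), smul_eq_mul]
  rw [Measure.smul_apply, Measure.restrict_apply hA, smul_eq_mul]
  have hsub : (fun x : EuclideanSpace ℝ (Fin (m' + 1)) => ⟪u, x⟫_ℝ) ⁻¹' A ∩ ball 0 s ⊆
      {x : EuclideanSpace ℝ (Fin (m' + 1)) | ⟪u, x⟫_ℝ ∈ A ∩ Ioo (-s) s ∧ ‖x‖ < s} := by
    rintro x ⟨hxA, hxb⟩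
    rw [mem_ball_zero_iff] at hxb
    have habs : |⟪u, x⟫_ℝ| < s := by
      calc |⟪u, x⟫_ℝ| ≤ ‖u‖ * ‖x‖ := abs_real_inner_le_norm u x
        _ = ‖x‖ := by rw [hu, one_mul]
        _ < s := hxb
    exact ⟨⟨hxA, abs_lt.mp habs⟩, hxb⟩
  calc (volume (ball (0 : EuclideanSpace ℝ (Fin (m' + 1))) s))⁻¹ *
        volume ((fun x : EuclideanSpace ℝ (Fin (m' + 1)) => ⟪u, x⟫_ℝ) ⁻¹' A ∩ ball 0 s)
      ≤ (volume (ball (0 : EuclideanSpace ℝ (Fin (m' + 1))) s))⁻¹ *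
        (volume (A ∩ Ioo (-s) s) * volume (ball (0 : EuclideanSpace ℝ (Fin m')) s)) := by
        apply mul_le_mul_right
        exact le_trans (measure_mono hsub) (slab_bound hs u hu (hA.inter measurableSet_Ioo))
    _ = (volume (ball (0 : EuclideanSpace ℝ (Fin (m' + 1))) s))⁻¹ *
        volume (ball (0 : EuclideanSpace ℝ (Fin m')) s) * volume (A ∩ Ioo (-s) s) := by ring

lemma prod_mono' {α β : Type*} [MeasurableSpace α] [MeasurableSpace β]
    {μ1 μ2 : Measure α} {ν1 ν2 : Measure β} [SFinite ν1] [SFinite ν2]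
    (h1 : μ1 ≤ μ2) (h2 : ν1 ≤ ν2) : μ1.prod ν1 ≤ μ2.prod ν2 := by
  rw [Measure.le_iff]
  intro S hS
  rw [Measure.prod_apply hS, Measure.prod_apply hS]
  exact lintegral_mono' h1 (fun a => h2 _)

lemma prod_smul_apply {α β : Type*} [MeasurableSpace α] [MeasurableSpace β]
    (μ : Measure α) (ν : Measure β) [SFinite ν] (c d : ENNReal) {S : Set (α × β)}
    (hS : MeasurableSet S) :
    ((c • μ).prod (d • ν)) S = c * d * (μ.prod ν) S := by
  rw [Measure.prod_apply hS, Measure.prod_apply hS, lintegral_smul_measure]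
  simp only [Measure.smul_apply, smul_eq_mul]
  rw [lintegral_const_mul d (measurable_measure_prodMk_left hS), ← mul_assoc]

lemma twoD {s ε : ℝ} (hs : 0 < s) (hε : 0 < ε) :
    ((volume.restrict (Ioo (-s) s)).prod (volume.restrict (Ioo (-s) s)))
        {p : ℝ × ℝ | |p.1 * p.2| ≤ ε}
      ≤ ENNReal.ofReal (4 * ε * (1 + Real.log (max (s ^ 2 / ε) 1))) := by
  set L := Real.log (max (s ^ 2 / ε) 1) with hL
  have hL0 : 0 ≤ L := Real.log_nonneg (le_max_right _ _)
  set h : ℝ → ℝ := fun t => min (2 * s) (2 * ε / |t|) with hh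
  have hmeas : Measurable h := measurable_const.min (measurable_const.div measurable_abs)
  have hpos : ∀ t, 0 ≤ h t := by
    intro t; apply le_min (by positivity) (by positivity)
  have hbound : ∀ t, ‖h t‖ ≤ ‖(2 * s : ℝ)‖ := by
    intro t
    rw [Real.norm_eq_abs, Real.norm_eq_abs, abs_of_nonneg (hpos t), abs_of_nonneg (by positivity)]
    exact min_le_left _ _
  have hInt : ∀ a b : ℝ, IntervalIntegrable h volume a b := by
    intro a b
    exact (intervalIntegrable_const (c := (2 * s : ℝ))).mono_fun
      hmeas.aestronglyMeasurable (ae_of_all _ hbound)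
  have hIoo : ∀ (a b : ℝ), a ≤ b → ∀ g : ℝ → ℝ, EqOn h g (Ioo a b) →
      (∫ t in a..b, h t) = ∫ t in Ioo a b, g t := by
    intro a b hab g hg
    rw [intervalIntegral.integral_of_le hab, integral_Ioc_eq_integral_Ioo]
    exact setIntegral_congr_fun measurableSet_Ioo hg
  -- the key one-sided integral bound
  have key1 : (∫ t in (0:ℝ)..s, h t) ≤ 2 * ε * (1 + L) := by
    by_cases hcase : s ^ 2 ≤ ε
    · have hLeq : L = 0 := by
        rw [hL, max_eq_right (by rw [div_le_one hε]; exact hcase), Real.log_one]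
      have heq : (∫ t in (0:ℝ)..s, h t) = ∫ t in Ioo (0:ℝ) s, (2 * s : ℝ) := by
        apply hIoo 0 s hs.le
        intro t ht
        rw [hh]
        apply min_eq_left
        rw [abs_of_pos ht.1, le_div_iff₀ ht.1]
        nlinarith [ht.2, ht.1]
      rw [heq, setIntegral_const, Real.volume_real_Ioo, sub_zero, max_eq_left hs.le,
        smul_eq_mul, hLeq]
      nlinarith
    · push_neg at hcase
      set t0 := ε / s with ht0def
      have ht0pos : 0 < t0 := by positivity
      have ht0lt : t0 < s := by rw [ht0def, div_lt_iff₀ hs]; nlinarith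
      have hLeq : L = Real.log (s ^ 2 / ε) := by
        rw [hL, max_eq_left]
        rw [le_div_iff₀ hε]; nlinarith
      have hsplit : (∫ t in (0:ℝ)..s, h t) = (∫ t in (0:ℝ)..t0, h t) + ∫ t in t0..s, h t :=
        (intervalIntegral.integral_add_adjacent_intervals (hInt 0 t0) (hInt t0 s)).symm
      have hpart1 : (∫ t in (0:ℝ)..t0, h t) = 2 * ε := by
        have heq : (∫ t in (0:ℝ)..t0, h t) = ∫ t in Ioo (0:ℝ) t0, (2 * s : ℝ) := by
          apply hIoo 0 t0 ht0pos.le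
          intro t ht
          rw [hh]
          apply min_eq_left
          rw [abs_of_pos ht.1, le_div_iff₀ ht.1]
          have := ht.2
          rw [ht0def] at this
          nlinarith [(lt_div_iff₀ hs).mp this]
        rw [heq, setIntegral_const, Real.volume_real_Ioo, sub_zero, max_eq_left ht0pos.le,
          smul_eq_mul, ht0def]
        field_simp
      have hpart2 : (∫ t in t0..s, h t) = 2 * ε * L := by
        have heq : (∫ t in t0..s, h t) = ∫ t in t0..s, 2 * ε * t⁻¹ := by
          rw [hIoo t0 s ht0lt.le (fun t => 2 * ε * t⁻¹) ?_,
            intervalIntegral.integral_of_le ht0lt.le, integral_Ioc_eq_integral_Ioo]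
          intro t ht
          have htpos : 0 < t := ht0pos.trans ht.1
          show (2 * s) ⊓ (2 * ε / |t|) = 2 * ε * t⁻¹
          rw [abs_of_pos htpos]
          rw [min_eq_right]
          · rw [div_eq_mul_inv]
          · rw [div_le_iff₀ htpos]
            have := ht.1
            rw [ht0def] at this
            nlinarith [(div_lt_iff₀ hs).mp this]
        rw [heq, intervalIntegral.integral_const_mul, integral_inv_of_pos ht0pos hs, hLeq, ht0def]
        congr 1
        rw [div_div_eq_mul_div]
        ring_nf
      rw [hsplit, hpart1, hpart2]; ring_nf; nlinarith
  -- measurability of the event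
  have hS : MeasurableSet {p : ℝ × ℝ | |p.1 * p.2| ≤ ε} :=
    measurableSet_le (measurable_fst.mul measurable_snd).abs measurable_const
  rw [Measure.prod_apply hS]
  have hsecmeas : ∀ t : ℝ, MeasurableSet {τ : ℝ | |t * τ| ≤ ε} :=
    fun t => measurableSet_le (measurable_const.mul measurable_id).abs measurable_const
  have hsec : ∀ᵐ t ∂(volume.restrict (Ioo (-s) s)),
      (volume.restrict (Ioo (-s) s)) (Prod.mk t ⁻¹' {p : ℝ × ℝ | |p.1 * p.2| ≤ ε})
        ≤ ENNReal.ofReal (h t) := by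
    have h0 : ∀ᵐ t ∂(volume.restrict (Ioo (-s) s)), t ≠ (0:ℝ) := by
      apply ae_restrict_of_ae
      rw [ae_iff]
      simp only [ne_eq, not_not, setOf_eq_eq_singleton]
      exact measure_singleton 0
    filter_upwards [h0] with t ht
    have hpre : Prod.mk t ⁻¹' {p : ℝ × ℝ | |p.1 * p.2| ≤ ε} = {τ : ℝ | |t * τ| ≤ ε} := rfl
    rw [hpre, Measure.restrict_apply (hsecmeas t)]
    rcases le_or_gt (2 * s) (2 * ε / |t|) with hc | hc
    · calc volume ({τ : ℝ | |t * τ| ≤ ε} ∩ Ioo (-s) s) ≤ volume (Ioo (-s) s) :=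
            measure_mono inter_subset_right
        _ = ENNReal.ofReal (2 * s) := by rw [Real.volume_Ioo]; congr 1; ring
        _ = ENNReal.ofReal (h t) := by rw [hh]; simp only [min_eq_left hc]
    · have habs : 0 < |t| := abs_pos.mpr ht
      calc volume ({τ : ℝ | |t * τ| ≤ ε} ∩ Ioo (-s) s)
          ≤ volume (Icc (-(ε / |t|)) (ε / |t|)) := by
            apply measure_mono
            apply inter_subset_left.trans
            intro τ hτ
            simp only [mem_setOf_eq] at hτ
            rw [abs_mul] at hτ
            have : |τ| ≤ ε / |t| := by rw [le_div_iff₀ habs, mul_comm]; exact hτ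
            exact abs_le.mp this
        _ = ENNReal.ofReal (2 * ε / |t|) := by
            rw [Real.volume_Icc]; congr 1; ring
        _ = ENNReal.ofReal (h t) := by rw [hh]; simp only [min_eq_right hc.le]
  calc (∫⁻ t in Ioo (-s) s, (volume.restrict (Ioo (-s) s))
          (Prod.mk t ⁻¹' {p : ℝ × ℝ | |p.1 * p.2| ≤ ε}))
      ≤ ∫⁻ t in Ioo (-s) s, ENNReal.ofReal (h t) := lintegral_mono_ae hsec
    _ = ENNReal.ofReal (∫ t in Ioo (-s) s, h t) := by
        rw [ofReal_integral_eq_lintegral_ofReal]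
        · apply Measure.integrableOn_of_bounded
          · rw [Real.volume_Ioo]; exact ENNReal.ofReal_ne_top
          · exact hmeas.aestronglyMeasurable
          · exact ae_of_all _ hbound
        · exact ae_of_all _ hpos
    _ ≤ ENNReal.ofReal (4 * ε * (1 + L)) := by
        apply ENNReal.ofReal_le_ofReal
        have hrw : (∫ t in Ioo (-s) s, h t) = ∫ t in (-s)..s, h t := by
          rw [intervalIntegral.integral_of_le (by linarith), integral_Ioc_eq_integral_Ioo]
        have hsplit : (∫ t in (-s)..s, h t) = (∫ t in (-s)..(0:ℝ), h t) + ∫ t in (0:ℝ)..s, h t :=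
          (intervalIntegral.integral_add_adjacent_intervals (hInt (-s) 0) (hInt 0 s)).symm
        have hneg : (∫ t in (-s)..(0:ℝ), h t) = ∫ t in (0:ℝ)..s, h t := by
          have h1 : (∫ x in (0:ℝ)..s, h (-x)) = ∫ x in (-s)..(0:ℝ), h x := by
            simpa using intervalIntegral.integral_comp_neg (a := (0:ℝ)) (b := s) h
          
          rw [← h1]
          apply intervalIntegral.integral_congr
          intro x _
          rw [hh]; simp only [abs_neg]
        rw [hrw, hsplit, hneg]
        linarith [key1]

lemma vol_ball_eq {s : ℝ} (hs : 0 < s) (k : ℕ) :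
    volume (ball (0 : EuclideanSpace ℝ (Fin k)) s) = ENNReal.ofReal (VB k * s ^ k) := by
  have hne : volume (ball (0 : EuclideanSpace ℝ (Fin k)) 1) ≠ ⊤ := measure_ball_lt_top.ne
  cases k with
  | zero =>
    have h1 : ∀ r : ℝ, 0 < r → ball (0 : EuclideanSpace ℝ (Fin 0)) r = univ := by
      intro r hr; ext x; simp only [mem_ball, mem_univ, iff_true]
      have : x = 0 := Subsingleton.elim x 0
      rw [this, dist_self]; exact hr
    rw [h1 s hs, ← h1 1 one_pos, VB, pow_zero, mul_one, ENNReal.ofReal_toReal hne]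
  | succ k' =>
    rw [Measure.addHaar_ball volume 0 hs.le, finrank_euclideanSpace_fin, VB,
      ENNReal.ofReal_mul (by positivity), ENNReal.ofReal_toReal hne, mul_comm]

theorem stmt7 (m n : ℕ) (s δ : ℝ) (hs : 0 < s) (hδ : 0 < δ)
    (X : Matrix (Fin m) (Fin n) ℝ) (hX : X.rank = 1) :
    ((unifBall (EuclideanSpace ℝ (Fin m)) s).prod (unifBall (EuclideanSpace ℝ (Fin n)) s))
        {p : EuclideanSpace ℝ (Fin m) × EuclideanSpace ℝ (Fin n) |
          |dotProduct (p.1 : Fin m → ℝ) (X.mulVec (p.2 : Fin n → ℝ))| ≤ δ}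
      ≤ ENNReal.ofReal (δ * (2 * VB (n - 1) * VB (m - 1) / (VB m * VB n)) * (sigma1 X)⁻¹ *
          (2 / s ^ 2 + 2 / s ^ 2 * Real.log (max (s ^ 2 * sigma1 X / δ) 1))) := by
  -- m and n are positive
  obtain ⟨m', rfl⟩ : ∃ m', m = m' + 1 := by
    have h1 : 1 ≤ m := by
      have := Matrix.rank_le_card_height X
      simp only [Fintype.card_fin] at this
      omega
    exact ⟨m - 1, by omega⟩
  obtain ⟨n', rfl⟩ : ∃ n', n = n' + 1 := by
    have h1 : 1 ≤ n := by
      have := Matrix.rank_le_card_width X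
      simp only [Fintype.card_fin] at this
      omega
    exact ⟨n - 1, by omega⟩
  obtain ⟨u₀, v₀, hu₀, hv₀, hXuv⟩ := rankOne_decomp X hX
  -- normalized vectors
  set U : EuclideanSpace ℝ (Fin (m' + 1)) := (WithLp.equiv 2 _).symm u₀ with hU
  set V : EuclideanSpace ℝ (Fin (n' + 1)) := (WithLp.equiv 2 _).symm v₀ with hV
  have hUne : U ≠ 0 := by
    intro h0
    apply hu₀
    funext i
    exact congrFun (congrArg (⇑(WithLp.equiv 2 (Fin (m' + 1) → ℝ))) h0) i
  have hVne : V ≠ 0 := by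
    intro h0
    apply hv₀
    funext j
    exact congrFun (congrArg (⇑(WithLp.equiv 2 (Fin (n' + 1) → ℝ))) h0) j
  have ha : 0 < ‖U‖ := norm_pos_iff.mpr hUne
  have hb : 0 < ‖V‖ := norm_pos_iff.mpr hVne
  set u : EuclideanSpace ℝ (Fin (m' + 1)) := ‖U‖⁻¹ • U with hu
  set v : EuclideanSpace ℝ (Fin (n' + 1)) := ‖V‖⁻¹ • V with hv
  have hun : ‖u‖ = 1 := by
    rw [hu, norm_smul, norm_inv, norm_norm, inv_mul_cancel₀ ha.ne']
  have hvn : ‖v‖ = 1 := by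
    rw [hv, norm_smul, norm_inv, norm_norm, inv_mul_cancel₀ hb.ne']
  have hui : ∀ i, u i = ‖U‖⁻¹ * u₀ i := fun i => rfl
  have hvi : ∀ j, v j = ‖V‖⁻¹ * v₀ j := fun j => rfl
  set c : ℝ := ‖U‖ * ‖V‖ with hcdef
  have hc : 0 < c := mul_pos ha hb
  have hXc : ∀ i j, X i j = c * (u i * v j) := by
    intro i j
    rw [hXuv i j, hui, hvi, hcdef]
    field_simp
  have hsum_u : ∑ i, u i ^ 2 = 1 := by
    have := hun
    rw [EuclideanSpace.norm_eq] at this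
    have h2 := Real.sqrt_eq_one.mp this
    simpa [Real.norm_eq_abs, sq_abs] using h2
  have hsum_v : ∑ j, v j ^ 2 = 1 := by
    have := hvn
    rw [EuclideanSpace.norm_eq] at this
    have h2 := Real.sqrt_eq_one.mp this
    simpa [Real.norm_eq_abs, sq_abs] using h2
  have hsigma : sigma1 X = c :=
    sigma1_of_rank_one X hX c hc (fun i => u i) (fun j => v j) hsum_u hsum_v hXc
  -- sfiniteness
  haveI hsf1 : SFinite (unifBall (EuclideanSpace ℝ (Fin (m' + 1))) s) := by
    unfold unifBall; infer_instance
  haveI hsf2 : SFinite (unifBall (EuclideanSpace ℝ (Fin (n' + 1))) s) := by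
    unfold unifBall; infer_instance
  -- inner product functionals
  set f : EuclideanSpace ℝ (Fin (m' + 1)) → ℝ := fun x => ⟪u, x⟫_ℝ with hf
  set g : EuclideanSpace ℝ (Fin (n' + 1)) → ℝ := fun y => ⟪v, y⟫_ℝ with hg
  have hfmeas : Measurable f := (continuous_const.inner continuous_id).measurable
  have hgmeas : Measurable g := (continuous_const.inner continuous_id).measurable
  -- the event rewrite
  have hdot : ∀ (x : EuclideanSpace ℝ (Fin (m' + 1))) (y : EuclideanSpace ℝ (Fin (n' + 1))),
      dotProduct (x : Fin (m' + 1) → ℝ) (X.mulVec (y : Fin (n' + 1) → ℝ))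
        = c * (f x * g y) := by
    intro x y
    simp only [hf, hg, dotProduct, Matrix.mulVec, PiLp.inner_apply, RCLike.inner_apply,
      conj_trivial]
    rw [Finset.sum_mul_sum, Finset.mul_sum]
    apply Finset.sum_congr rfl
    intro i _
    rw [Finset.mul_sum, Finset.mul_sum]
    apply Finset.sum_congr rfl
    intro j _
    rw [hXc]
    ring
  set S : Set (ℝ × ℝ) := {q : ℝ × ℝ | |q.1 * q.2| ≤ δ / c} with hSdef
  have hSm : MeasurableSet S :=
    measurableSet_le (measurable_fst.mul measurable_snd).abs measurable_const
  have hev : {p : EuclideanSpace ℝ (Fin (m' + 1)) × EuclideanSpace ℝ (Fin (n' + 1)) |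
      |dotProduct (p.1 : Fin (m' + 1) → ℝ) (X.mulVec (p.2 : Fin (n' + 1) → ℝ))| ≤ δ}
      = (Prod.map f g) ⁻¹' S := by
    ext ⟨x, y⟩
    simp only [mem_setOf_eq, mem_preimage, Prod.map_apply, hSdef]
    rw [hdot x y, abs_mul, abs_of_pos hc, le_div_iff₀ hc, mul_comm]
  rw [hev, hsigma]
  set κm : ENNReal := (volume (ball (0 : EuclideanSpace ℝ (Fin (m' + 1))) s))⁻¹ *
    volume (ball (0 : EuclideanSpace ℝ (Fin m')) s) with hκm
  set κn : ENNReal := (volume (ball (0 : EuclideanSpace ℝ (Fin (n' + 1))) s))⁻¹ *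
    volume (ball (0 : EuclideanSpace ℝ (Fin n')) s) with hκn
  have hδc : 0 < δ / c := by positivity
  calc ((unifBall (EuclideanSpace ℝ (Fin (m' + 1))) s).prod
          (unifBall (EuclideanSpace ℝ (Fin (n' + 1))) s)) (Prod.map f g ⁻¹' S)
      = ((Measure.map f (unifBall (EuclideanSpace ℝ (Fin (m' + 1))) s)).prod
          (Measure.map g (unifBall (EuclideanSpace ℝ (Fin (n' + 1))) s))) S := by
        rw [Measure.map_prod_map _ _ hfmeas hgmeas,
          Measure.map_apply (hfmeas.prodMap hgmeas) hSm]
    _ ≤ ((κm • volume.restrict (Ioo (-s) s)).prod (κn • volume.restrict (Ioo (-s) s))) S :=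
        Measure.le_iff'.mp (prod_mono' (map_inner_le hs u hun) (map_inner_le hs v hvn)) S
    _ = κm * κn * ((volume.restrict (Ioo (-s) s)).prod (volume.restrict (Ioo (-s) s))) S :=
        prod_smul_apply _ _ _ _ hSm
    _ ≤ κm * κn * ENNReal.ofReal (4 * (δ / c) * (1 + Real.log (max (s ^ 2 / (δ / c)) 1))) :=
        mul_le_mul_right (twoD hs hδc) _
    _ ≤ ENNReal.ofReal (δ * (2 * VB (n' + 1 - 1) * VB (m' + 1 - 1) / (VB (m' + 1) * VB (n' + 1))) * c⁻¹ *
          (2 / s ^ 2 + 2 / s ^ 2 * Real.log (max (s ^ 2 * c / δ) 1))) := by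
        -- numeric: rewrite κ's as ofReal
        have hVBpos : ∀ k : ℕ, 0 < VB k := fun k =>
          ENNReal.toReal_pos (measure_ball_pos volume 0 one_pos).ne' measure_ball_lt_top.ne
        have hPmpos : 0 < VB (m' + 1) * s ^ (m' + 1) := mul_pos (hVBpos _) (pow_pos hs _)
        have hPnpos : 0 < VB (n' + 1) * s ^ (n' + 1) := mul_pos (hVBpos _) (pow_pos hs _)
        have hQmpos : 0 < VB m' * s ^ m' := mul_pos (hVBpos _) (pow_pos hs _)
        have hQnpos : 0 < VB n' * s ^ n' := mul_pos (hVBpos _) (pow_pos hs _)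
        have hκm' : κm = ENNReal.ofReal ((VB (m' + 1) * s ^ (m' + 1))⁻¹ * (VB m' * s ^ m')) := by
          rw [hκm, vol_ball_eq hs, vol_ball_eq hs,
            ← ENNReal.ofReal_inv_of_pos hPmpos,
            ← ENNReal.ofReal_mul (inv_pos.mpr hPmpos).le]
        have hκn' : κn = ENNReal.ofReal ((VB (n' + 1) * s ^ (n' + 1))⁻¹ * (VB n' * s ^ n')) := by
          rw [hκn, vol_ball_eq hs, vol_ball_eq hs,
            ← ENNReal.ofReal_inv_of_pos hPnpos,
            ← ENNReal.ofReal_mul (inv_pos.mpr hPnpos).le]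
        rw [hκm', hκn',
          ← ENNReal.ofReal_mul (mul_pos (inv_pos.mpr hPmpos) hQmpos).le,
          ← ENNReal.ofReal_mul
            (mul_pos (mul_pos (inv_pos.mpr hPmpos) hQmpos) (mul_pos (inv_pos.mpr hPnpos) hQnpos)).le]
        apply ENNReal.ofReal_le_ofReal
        have hlog : Real.log (max (s ^ 2 / (δ / c)) 1) = Real.log (max (s ^ 2 * c / δ) 1) := by
          rw [div_div_eq_mul_div]
        rw [hlog]
        have hm1 : (m' + 1 - 1 : ℕ) = m' := rfl
        have hn1 : (n' + 1 - 1 : ℕ) = n' := rfl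
        rw [hm1, hn1]
        set L := Real.log (max (s ^ 2 * c / δ) 1)
        have heq : (VB (m' + 1) * s ^ (m' + 1))⁻¹ * (VB m' * s ^ m') *
            ((VB (n' + 1) * s ^ (n' + 1))⁻¹ * (VB n' * s ^ n')) *
            (4 * (δ / c) * (1 + L)) =
            δ * (2 * VB n' * VB m' / (VB (m' + 1) * VB (n' + 1))) * c⁻¹ *
            (2 / s ^ 2 + 2 / s ^ 2 * L) := by
          have h1 : VB (m' + 1) ≠ 0 := (hVBpos _).ne'
          have h2 : VB (n' + 1) ≠ 0 := (hVBpos _).ne'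
          have h3 : (s : ℝ) ≠ 0 := hs.ne'
          have h4 : c ≠ 0 := hc.ne'
          have h5 : (s : ℝ) ^ m' ≠ 0 := pow_ne_zero _ h3
          have h6 : (s : ℝ) ^ n' ≠ 0 := pow_ne_zero _ h3
          rw [pow_succ, pow_succ]
          field_simp
          ring
        rw [heq]
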